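/- Deleting the values 1 and 2 from the permutation 2 4 6 … (2m) 1 3 5 … (2m−1) (for m ≥ 3) and rank-ordering the remaining values yields a simple permutation of length 2m − 2, namely 2 4 6 … (2m−2) 1 3 5 … (2m−3) shifted appropriately; in particular there exists a two-point deletion of this exceptional permutation yielding a simple permutation. -/

import Mathlib

/-- A block of a permutation is a set of consecutive positions whose image is a
range of consecutive values. `π` is simple if every block is a singleton or everything. -/
def IsSimple {n : ℕ} (π : Equiv.Perm (Fin n)) : Prop :=
  ∀ a b : Fin n, a ≤ b →
    (∃ c d : Fin n, (Finset.Icc a b).image π = Finset.Icc c d) →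
    a = b ∨ Finset.Icc a b = Finset.univ

/-- Two strictly monotone maps from `Fin n` with the same range are equal. -/
lemma sm_range_eq {n : ℕ} {α : Type*} [LinearOrder α] {f g : Fin n → α}
    (hf : StrictMono f) (hg : StrictMono g)
    (h : ∀ x, (∃ a, f a = x) ↔ (∃ a, g a = x)) : f = g := by
  suffices H : ∀ N, ∀ i : Fin n, (i : ℕ) < N → f i = g i by
    funext i
    exact H n i i.2
  intro N
  induction N with
  | zero => intro i hi; omega
  | succ N IH =>
    intro i hi
    obtain ⟨j, hj⟩ := (h (f i)).mp ⟨i, rfl⟩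
    rcases lt_trichotomy j i with hji | hji | hji
    · exfalso
      have h1 : f j = g j := IH j (by have : (j : ℕ) < (i : ℕ) := hji; omega)
      have h2 : f j = f i := h1.trans hj
      have := hf.injective h2
      subst this
      exact lt_irrefl j hji
    · subst hji
      exact hj.symm
    · exfalso
      obtain ⟨j', hj'⟩ := (h (g i)).mpr ⟨i, rfl⟩
      have hgi : g i < g j := hg hji
      rw [hj] at hgi
      have hj'i : j' < i := by
        have : f j' < f i := hj' ▸ hgi
        exact hf.lt_iff_lt.mp this
      have h1 : g j' = g i := (IH j' (by have : (j' : ℕ) < (i : ℕ) := hj'i; omega)).symm.trans hj'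
      have := hg.injective h1
      subst this
      exact lt_irrefl j' hj'i

/-- Two permutations inducing the same order comparisons are equal. -/
lemma perm_eq_of_lt_iff {n : ℕ} (τ ρ : Equiv.Perm (Fin n))
    (h : ∀ a b, τ a < τ b ↔ ρ a < ρ b) : τ = ρ := by
  have hsm : StrictMono (fun x => τ (ρ.symm x)) := by
    intro x y hxy
    exact (h _ _).mpr (by simpa using hxy)
  have hid : (fun x => τ (ρ.symm x)) = (fun x : Fin n => x) := by
    apply sm_range_eq hsm strictMono_id
    intro x
    constructor
    · intro _; exact ⟨x, rfl⟩
    · intro _; exact ⟨ρ (τ.symm x), by simp⟩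
  apply Equiv.ext
  intro a
  have := congrFun hid (ρ a)
  simpa using this

/-- The permutation `1 3 5 … (2k−1) 0 2 4 … (2k−2)` (0-indexed) is simple for `k ≥ 2`. -/
lemma simple_aux {n k : ℕ} (hn : n = 2 * k) (hk : 2 ≤ k) (π : Equiv.Perm (Fin n))
    (h : ∀ i : Fin n, (π i : ℕ) = if (i : ℕ) < k then 2 * (i : ℕ) + 1 else 2 * ((i : ℕ) - k)) :
    IsSimple π := by
  intro a b hab hcd
  by_cases hab' : a = b
  · exact Or.inl hab'
  right
  obtain ⟨c, d, him⟩ := hcd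
  have habv : (a : ℕ) ≤ (b : ℕ) := hab
  have hane : (a : ℕ) < (b : ℕ) := lt_of_le_of_ne habv (fun hh => hab' (Fin.ext hh))
  have hcard : (b : ℕ) + 1 - (a : ℕ) = (d : ℕ) + 1 - (c : ℕ) := by
    have hc := congrArg Finset.card him
    rwa [Finset.card_image_of_injective _ π.injective, Fin.card_Icc, Fin.card_Icc] at hc
  have hmem : ∀ x : Fin n, (a : ℕ) ≤ x → (x : ℕ) ≤ b → (c : ℕ) ≤ π x ∧ (π x : ℕ) ≤ d := by
    intro x h1 h2
    have hx : π x ∈ Finset.Icc c d := by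
      rw [← him]
      exact Finset.mem_image_of_mem _ (Finset.mem_Icc.mpr ⟨h1, h2⟩)
    have hx2 := Finset.mem_Icc.mp hx
    exact ⟨Fin.le_def.mp hx2.1, Fin.le_def.mp hx2.2⟩
  have hdlt : (d : ℕ) < n := d.2
  rcases lt_or_ge (b : ℕ) k with hb | hb
  · exfalso
    have h1 := hmem a le_rfl habv
    have h2 := hmem b habv le_rfl
    have ha' := h a
    have hb' := h b
    rw [if_pos (by omega)] at ha'
    rw [if_pos hb] at hb'
    omega
  rcases le_or_gt k (a : ℕ) with ha | ha
  · exfalso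
    have h1 := hmem a le_rfl habv
    have h2 := hmem b habv le_rfl
    have ha' := h a
    have hb' := h b
    rw [if_neg (by omega)] at ha'
    rw [if_neg (by omega)] at hb'
    have := b.2
    omega
  · -- a < k ≤ b
    have hkn : k < n := by omega
    have hk1n : k - 1 < n := by omega
    have h1 := hmem ⟨k, hkn⟩ (by show (a : ℕ) ≤ k; omega) (by show k ≤ (b : ℕ); omega)
    have h2 := hmem ⟨k - 1, hk1n⟩ (by show (a : ℕ) ≤ k - 1; omega) (by show k - 1 ≤ (b : ℕ); omega)
    have hp' := h ⟨k, hkn⟩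
    have hq' := h ⟨k - 1, hk1n⟩
    rw [if_neg (lt_irrefl k)] at hp'
    rw [if_pos (show k - 1 < k by omega)] at hq'
    have hr1 : (((⟨k, hkn⟩ : Fin n)) : ℕ) = k := rfl
    have hr2 : (((⟨k - 1, hk1n⟩ : Fin n)) : ℕ) = k - 1 := rfl
    rw [hr1] at hp'
    rw [hr2] at hq'
    have hc0 : (c : ℕ) = 0 := by omega
    have hd0 : (d : ℕ) = 2 * k - 1 := by omega
    have ha0 : (a : ℕ) = 0 := by omega
    have hb0 : (b : ℕ) = 2 * k - 1 := by omega
    apply Finset.eq_univ_iff_forall.mpr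
    intro x
    rw [Finset.mem_Icc]
    have := x.2
    constructor
    · show (a : ℕ) ≤ (x : ℕ); omega
    · show (x : ℕ) ≤ (b : ℕ); omega

def efun (m : ℕ) (a : Fin (2 * m - 2)) : Fin (2 * m) :=
  ⟨if (a : ℕ) < m - 1 then (a : ℕ) + 1 else (a : ℕ) + 2, by have := a.2; split <;> omega⟩

def rhoFun (m : ℕ) (a : Fin (2 * m - 2)) : Fin (2 * m - 2) :=
  ⟨if (a : ℕ) < m - 1 then 2 * (a : ℕ) + 1 else 2 * ((a : ℕ) - (m - 1)),
    by have := a.2; split <;> omega⟩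

lemma rhoFun_inj (m : ℕ) : Function.Injective (rhoFun m) := by
  intro a b hab
  have h := congrArg Fin.val hab
  simp only [rhoFun] at h
  apply Fin.ext
  split_ifs at h <;> omega

noncomputable def rhoPerm (m : ℕ) : Equiv.Perm (Fin (2 * m - 2)) :=
  Equiv.ofBijective (rhoFun m) (Finite.injective_iff_bijective.mp (rhoFun_inj m))

lemma rhoPerm_val (m : ℕ) (i : Fin (2 * m - 2)) :
    (rhoPerm m i : ℕ) = if (i : ℕ) < m - 1 then 2 * (i : ℕ) + 1 else 2 * ((i : ℕ) - (m - 1)) := by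
  simp [rhoPerm, rhoFun]

/-- Deleting the values 1 and 2 (0-indexed: the values 0 and 1) from the exceptional
permutation 2 4 6 … (2m) 1 3 5 … (2m−1), m ≥ 3, and rank-ordering yields a simple
permutation of length 2m − 2; in particular a two-point deletion of this exceptional
permutation yields a simple permutation.  Here `e` enumerates (strictly monotonically)
the positions whose value is kept, and `τ` is the rank-ordering. -/
theorem exceptional_two_point_deletion_simple (m : ℕ) (hm : 3 ≤ m)
    (σ : Equiv.Perm (Fin (2 * m)))
    (hσ : ∀ i : Fin (2 * m),
      (σ i : ℕ) = if (i : ℕ) < m then 2 * (i : ℕ) + 1 else 2 * ((i : ℕ) - m)) :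
    (∀ (τ : Equiv.Perm (Fin (2 * m - 2))) (e : Fin (2 * m - 2) → Fin (2 * m)),
      StrictMono e → (∀ x : Fin (2 * m), (∃ a, e a = x) ↔ 2 ≤ (σ x : ℕ)) →
      (∀ a b, τ a < τ b ↔ σ (e a) < σ (e b)) → IsSimple τ) ∧
    (∃ (τ : Equiv.Perm (Fin (2 * m - 2))) (e : Fin (2 * m - 2) → Fin (2 * m)),
      StrictMono e ∧ (∀ x : Fin (2 * m), (∃ a, e a = x) ↔ 2 ≤ (σ x : ℕ)) ∧
      (∀ a b, τ a < τ b ↔ σ (e a) < σ (e b)) ∧ IsSimple τ) := by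
  have hσ0 : ∀ x : Fin (2 * m), 2 ≤ (σ x : ℕ) ↔ ((x : ℕ) ≠ 0 ∧ (x : ℕ) ≠ m) := by
    intro x
    rw [hσ x]
    split <;> omega
  have hesm : StrictMono (efun m) := by
    intro a b hab
    have hab' : (a : ℕ) < (b : ℕ) := hab
    show (efun m a : ℕ) < (efun m b : ℕ)
    simp only [efun]
    split_ifs <;> omega
  have herange : ∀ x : Fin (2 * m), (∃ a, efun m a = x) ↔ 2 ≤ (σ x : ℕ) := by
    intro x
    rw [hσ0]
    constructor
    · rintro ⟨a, rfl⟩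
      have := a.2
      simp only [efun]
      split <;> omega
    · rintro ⟨h1, h2⟩
      have hx := x.2
      refine ⟨⟨if (x : ℕ) < m then (x : ℕ) - 1 else (x : ℕ) - 2, by split <;> omega⟩, ?_⟩
      apply Fin.ext
      simp only [efun]
      split_ifs <;> omega
  have hval : ∀ a : Fin (2 * m - 2), (σ (efun m a) : ℕ) = (rhoPerm m a : ℕ) + 2 := by
    intro a
    rw [hσ, rhoPerm_val]
    have := a.2
    simp only [efun]
    split_ifs <;> omega
  have hsimp : IsSimple (rhoPerm m) :=
    simple_aux (k := m - 1) (by omega) (by omega) _ (fun i => rhoPerm_val m i)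
  have hcompat : ∀ a b, rhoPerm m a < rhoPerm m b ↔ σ (efun m a) < σ (efun m b) := by
    intro a b
    rw [Fin.lt_def, Fin.lt_def, hval, hval]
    omega
  constructor
  · intro τ e hesm' hrange hcomp
    have he : e = efun m :=
      sm_range_eq hesm' hesm (fun x => (hrange x).trans (herange x).symm)
    subst he
    have hτρ : τ = rhoPerm m := by
      apply perm_eq_of_lt_iff
      intro a b
      rw [hcomp a b, hcompat a b]
    rw [hτρ]
    exact hsimp
  · exact ⟨rhoPerm m, efun m, hesm, herange, fun a b => hcompat a b, hsimp⟩
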